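/- arXiv:1009.3994 — 3 statements merged into one kernel-verified Lean document; each statement's English description precedes it below -/
import Mathlib

section
/- For each t ∈ ℝ and (μ1, μ2) ∈ ℂ² with 1 + μ1 μ̄2 ≠ 0, the matrix γ(t) = (1/|1+μ1μ̄2|)·[[e^t + e^{-t}|μ1|², e^t μ2 - e^{-t} μ1],[e^t μ̄2 - e^{-t} μ̄1, e^t|μ2|² + e^{-t}]] is Hermitian, has determinant 1 and positive trace; hence t ↦ γ(t) is a curve in the Hermitian model of H³. -/
open Matrix

noncomputable def gammaGeo (μ1 μ2 : ℂ) (t : ℝ) : Matrix (Fin 2) (Fin 2) ℂ :=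
  (1 / (‖1 + μ1 * star μ2‖ : ℂ)) •
    !![(Real.exp t : ℂ) + (Real.exp (-t) : ℂ) * (‖μ1‖^2 : ℝ),
       (Real.exp t : ℂ) * μ2 - (Real.exp (-t) : ℂ) * μ1;
       (Real.exp t : ℂ) * star μ2 - (Real.exp (-t) : ℂ) * star μ1,
       (Real.exp t : ℂ) * (‖μ2‖^2 : ℝ) + (Real.exp (-t) : ℂ)]

theorem stmt_5 (μ1 μ2 : ℂ) (h : 1 + μ1 * star μ2 ≠ 0) (t : ℝ) :
    (gammaGeo μ1 μ2 t)ᴴ = gammaGeo μ1 μ2 t ∧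
    (gammaGeo μ1 μ2 t).det = 1 ∧
    0 < (gammaGeo μ1 μ2 t).trace.re := by
  have ha : (0:ℝ) < ‖1 + μ1 * star μ2‖ := by
    exact norm_pos_iff.mpr h
  have ha' : (‖1 + μ1 * star μ2‖ : ℂ) ≠ 0 := by
    exact_mod_cast ha.ne'
  refine ⟨?_, ?_, ?_⟩
  · ext i j
    fin_cases i <;> fin_cases j <;>
      simp [gammaGeo, Matrix.conjTranspose_apply, star_sub, star_add,
        StarMul.star_mul, Complex.star_def, Complex.conj_ofReal,
        -Complex.ofReal_exp, -Complex.ofReal_pow] <;> ring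
  · have hE : (Real.exp t : ℂ) * (Real.exp (-t) : ℂ) = 1 := by
      rw [← Complex.ofReal_mul, ← Real.exp_add]; simp
    have hz : ((‖1 + μ1 * star μ2‖ : ℝ) : ℂ)^2
        = (1 + μ1 * star μ2) * (1 + star μ1 * μ2) := by
      rw [show ((‖1 + μ1 * star μ2‖ : ℝ) : ℂ)^2
          = ((‖1 + μ1 * star μ2‖^2 : ℝ) : ℂ) by push_cast; ring,
        Complex.sq_norm, ← Complex.mul_conj]
      simp only [Complex.star_def, map_add, _root_.map_one, _root_.map_mul,
        Complex.conj_conj]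
    have h1 : ((‖μ1‖ : ℝ) : ℂ)^2 = μ1 * star μ1 := by
      rw [show ((‖μ1‖ : ℝ) : ℂ)^2 = ((‖μ1‖^2 : ℝ) : ℂ) by push_cast; ring,
        Complex.sq_norm, ← Complex.mul_conj]
      simp [Complex.star_def]
    have h2 : ((‖μ2‖ : ℝ) : ℂ)^2 = μ2 * star μ2 := by
      rw [show ((‖μ2‖ : ℝ) : ℂ)^2 = ((‖μ2‖^2 : ℝ) : ℂ) by push_cast; ring,
        Complex.sq_norm, ← Complex.mul_conj]
      simp [Complex.star_def]
    simp only [gammaGeo, Matrix.det_smul, Matrix.det_fin_two_of, Fintype.card_fin,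
      smul_eq_mul, Complex.star_def] at *
    push_cast [-Complex.ofReal_exp] at *
    rw [div_pow, one_pow, div_mul_eq_mul_div, one_mul,
      div_eq_one_iff_eq (pow_ne_zero 2 ha'), hz]
    linear_combination ((1 + μ1 * (starRingEnd ℂ) μ2) * (1 + (starRingEnd ℂ) μ1 * μ2)) * hE
      + ((Real.exp (-t) : ℂ)^2 + (Real.exp t : ℂ) * (Real.exp (-t) : ℂ) * ((‖μ2‖ : ℝ) : ℂ)^2) * h1
      + ((Real.exp t : ℂ)^2 + (Real.exp t : ℂ) * (Real.exp (-t) : ℂ) * (μ1 * (starRingEnd ℂ) μ1)) * h2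
  · have htr : (gammaGeo μ1 μ2 t).trace
        = (((Real.exp t + Real.exp (-t) * ‖μ1‖^2
            + Real.exp t * ‖μ2‖^2 + Real.exp (-t))
            / ‖1 + μ1 * star μ2‖ : ℝ) : ℂ) := by
      simp [gammaGeo, Matrix.trace_fin_two, Matrix.smul_apply,
        -Complex.ofReal_exp, -Complex.ofReal_pow]
      push_cast [-Complex.ofReal_exp]
      field_simp
      ring
    rw [htr, Complex.ofReal_re]
    have e1 := Real.exp_pos t
    have e2 := Real.exp_pos (-t)
    positivity
end

section
/- The curve γ(t) from the previous parametrization is a unit-speed geodesic: with the Minkowski inner product ⟨X,Y⟩ = -(1/2)trace(X Ỹ) (Ỹ the cofactor matrix), one has ⟨γ'(t), γ'(t)⟩ = 1 and γ''(t) = γ(t) for all t. -/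
open Matrix

/-- The t-derivative of `gammaGeo`. -/
noncomputable def gammaGeoD (μ1 μ2 : ℂ) (t : ℝ) : Matrix (Fin 2) (Fin 2) ℂ :=
  (1 / (‖1 + μ1 * star μ2‖ : ℂ)) •
    !![(Real.exp t : ℂ) - (Real.exp (-t) : ℂ) * (‖μ1‖^2 : ℝ),
       (Real.exp t : ℂ) * μ2 + (Real.exp (-t) : ℂ) * μ1;
       (Real.exp t : ℂ) * star μ2 + (Real.exp (-t) : ℂ) * star μ1,
       (Real.exp t : ℂ) * (‖μ2‖^2 : ℝ) - (Real.exp (-t) : ℂ)]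

theorem stmt_6 (μ1 μ2 : ℂ) (h : 1 + μ1 * star μ2 ≠ 0) (t : ℝ) :
    (∀ i j, HasDerivAt (fun u => gammaGeo μ1 μ2 u i j) (gammaGeoD μ1 μ2 t i j) t) ∧
    (∀ i j, HasDerivAt (fun u => gammaGeoD μ1 μ2 u i j) (gammaGeo μ1 μ2 t i j) t) ∧
    -(1/2 : ℂ) * ((gammaGeoD μ1 μ2 t) * (gammaGeoD μ1 μ2 t).adjugate).trace = 1 := by
  have hE : HasDerivAt (fun u : ℝ => (Real.exp u : ℂ)) (Real.exp t : ℂ) t :=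
    (Real.hasDerivAt_exp t).ofReal_comp
  have hEm : HasDerivAt (fun u : ℝ => (Real.exp (-u) : ℂ)) (-(Real.exp (-t)) : ℂ) t := by
    have := ((Real.hasDerivAt_exp (-t)).comp t (hasDerivAt_neg t)).ofReal_comp
    simpa using this
  refine ⟨?_, ?_, ?_⟩
  · intro i j
    fin_cases i <;> fin_cases j <;>
      simp only [gammaGeo, gammaGeoD, Matrix.smul_apply, smul_eq_mul, Fin.zero_eta, Fin.mk_one,
        cons_val', cons_val_zero, cons_val_one, head_cons, head_fin_const, empty_val',
        cons_val_fin_one, of_apply]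
    · refine HasDerivAt.const_mul _ ?_
      convert (hE.add (hEm.mul_const ((‖μ1‖^2 : ℝ) : ℂ))) using 1
      exacts [rfl, rfl, by ring]
    · refine HasDerivAt.const_mul _ ?_
      convert ((hE.mul_const μ2).sub (hEm.mul_const μ1)) using 1
      exacts [rfl, rfl, by ring]
    · refine HasDerivAt.const_mul _ ?_
      convert ((hE.mul_const (star μ2)).sub (hEm.mul_const (star μ1))) using 1
      exacts [rfl, rfl, by ring]
    · refine HasDerivAt.const_mul _ ?_
      convert ((hE.mul_const ((‖μ2‖^2 : ℝ) : ℂ)).add hEm) using 1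
      exacts [rfl, rfl, by ring]
  · intro i j
    fin_cases i <;> fin_cases j <;>
      simp only [gammaGeo, gammaGeoD, Matrix.smul_apply, smul_eq_mul, Fin.zero_eta, Fin.mk_one,
        cons_val', cons_val_zero, cons_val_one, head_cons, head_fin_const, empty_val',
        cons_val_fin_one, of_apply]
    · refine HasDerivAt.const_mul _ ?_
      convert (hE.sub (hEm.mul_const ((‖μ1‖^2 : ℝ) : ℂ))) using 1
      exacts [rfl, rfl, by ring]
    · refine HasDerivAt.const_mul _ ?_
      convert ((hE.mul_const μ2).add (hEm.mul_const μ1)) using 1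
      exacts [rfl, rfl, by ring]
    · refine HasDerivAt.const_mul _ ?_
      convert ((hE.mul_const (star μ2)).add (hEm.mul_const (star μ1))) using 1
      exacts [rfl, rfl, by ring]
    · refine HasDerivAt.const_mul _ ?_
      convert ((hE.mul_const ((‖μ2‖^2 : ℝ) : ℂ)).sub hEm) using 1
      exacts [rfl, rfl, by ring]
  · have hexp : (Real.exp t : ℂ) * (Real.exp (-t) : ℂ) = 1 := by
      norm_cast
      rw [← Real.exp_add]
      simp
    have hμ1 : ((‖μ1‖ ^ 2 : ℝ) : ℂ) = μ1 * (starRingEnd ℂ) μ1 := by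
      rw [Complex.sq_norm]; exact (Complex.mul_conj μ1).symm
    have hμ2 : ((‖μ2‖ ^ 2 : ℝ) : ℂ) = μ2 * (starRingEnd ℂ) μ2 := by
      rw [Complex.sq_norm]; exact (Complex.mul_conj μ2).symm
    have habs : ((‖1 + μ1 * star μ2‖ : ℝ) : ℂ) ^ 2
        = (1 + μ1 * star μ2) * (starRingEnd ℂ) (1 + μ1 * star μ2) := by
      rw [Complex.mul_conj]
      norm_cast
      rw [← Complex.sq_norm]
    have hA : ((‖1 + μ1 * star μ2‖ : ℝ) : ℂ) ≠ 0 := by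
      simpa using h
    have hdet : (gammaGeoD μ1 μ2 t).det = -1 := by
      rw [gammaGeoD, Matrix.det_smul, Matrix.det_fin_two_of]
      simp only [Fintype.card_fin]
      rw [div_pow, one_pow, habs, hμ1, hμ2]
      have hX : ((1 + μ1 * star μ2) * (starRingEnd ℂ) (1 + μ1 * star μ2)) ≠ 0 :=
        mul_ne_zero h (by rw [Ne, map_eq_zero]; exact h)
      rw [div_mul_eq_mul_div, one_mul, div_eq_iff hX]
      simp only [Complex.star_def, _root_.map_add, _root_.map_one, _root_.map_mul,
        Complex.conj_conj]
      linear_combination (-(1 + (starRingEnd ℂ) μ1 * μ2 + μ1 * (starRingEnd ℂ) μ2 +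
        μ1 * (starRingEnd ℂ) μ1 * μ2 * (starRingEnd ℂ) μ2)) * hexp
    rw [Matrix.mul_adjugate, hdet]
    simp [Matrix.trace_smul]
    try ring
end

section
/- Let α(s) = (μ1(s), μ2(s)) be a regular C¹ curve in ℂ² with 1+μ1μ̄2 ≠ 0. If G^i(α',α') = 0 and G^r(α',α') > 0 at some s0, then, setting c = 4|μ1'(s0)||μ2'(s0)|/|1+μ1(s0)μ̄2(s0)|², one has G^r(α'(s0),α'(s0)) = c and Λ(s0,t) = c·sinh²(t + (1/2)log(|μ2'(s0)|/|μ1'(s0)|)); in particular Λ(s0, t0) = 0 for t0 = (log|μ1'(s0)| - log|μ2'(s0)|)/2. -/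
/-- The squared area element Λ of the ruled surface generated by a geodesic
congruence, at a point with coordinates (m1, m2) and velocity (d1, d2). -/
noncomputable def Lam (m1 m2 d1 d2 : ℂ) (t : ℝ) : ℝ :=
  (Real.exp (2*t) * ‖d2‖^2 + Real.exp (-(2*t)) * ‖d1‖^2) /
      ‖1 + m1 * star m2‖^2
    - (1/2) * (4 * d1 * star d2 / (1 + m1 * star m2)^2).re

lemma sinh_sq_aux (x : ℝ) :
    Real.sinh x ^ 2 = (Real.exp (2*x) + Real.exp (-(2*x)) - 2) / 4 := by
  have h1 : Real.exp (2*x) = Real.exp x ^ 2 := by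
    rw [two_mul, Real.exp_add]; ring
  have h2 : Real.exp (-(2*x)) = Real.exp (-x) ^ 2 := by
    have : -(2*x) = -x + -x := by ring
    rw [this, Real.exp_add]; ring
  have h3 : Real.exp x * Real.exp (-x) = 1 := by
    rw [← Real.exp_add]; simp
  rw [Real.sinh_eq, h1, h2]
  nlinarith [h3]

theorem stmt_13 (m1 m2 d1 d2 : ℂ) (hden : 1 + m1 * star m2 ≠ 0)
    (hreg : ¬(d1 = 0 ∧ d2 = 0))
    (hGi : (4 * d1 * star d2 / (1 + m1 * star m2)^2).im = 0)
    (hGr : 0 < (4 * d1 * star d2 / (1 + m1 * star m2)^2).re) :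
    (4 * d1 * star d2 / (1 + m1 * star m2)^2).re =
        4 * ‖d1‖ * ‖d2‖ / ‖1 + m1 * star m2‖^2 ∧
    (∀ t, Lam m1 m2 d1 d2 t =
        (4 * ‖d1‖ * ‖d2‖ / ‖1 + m1 * star m2‖^2) *
          Real.sinh (t + (1/2) * Real.log (‖d2‖ / ‖d1‖))^2) ∧
    Lam m1 m2 d1 d2 ((Real.log (‖d1‖) - Real.log (‖d2‖)) / 2) = 0 := by
  set z : ℂ := 4 * d1 * star d2 / (1 + m1 * star m2)^2 with hz
  have habs : ‖z‖ = 4 * ‖d1‖ * ‖d2‖ /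
      ‖1 + m1 * star m2‖^2 := by
    rw [hz, norm_div, norm_mul, norm_mul, norm_pow]
    simp
  have hre : z.re = ‖z‖ := by
    have : z = (z.re : ℂ) := Complex.ext rfl (by simpa using hGi)
    rw [this]
    simp [abs_of_pos hGr]
  have h1 : z.re = 4 * ‖d1‖ * ‖d2‖ /
      ‖1 + m1 * star m2‖^2 := by rw [hre, habs]
  have hd1 : d1 ≠ 0 := by
    rintro rfl; simp [hz] at hGr
  have hd2 : d2 ≠ 0 := by
    rintro rfl; simp [hz] at hGr
  have ha : 0 < ‖d1‖ := by simpa using hd1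
  have hb : 0 < ‖d2‖ := by simpa using hd2
  have hD : 0 < ‖1 + m1 * star m2‖ := by simpa using hden
  set a := ‖d1‖
  set b := ‖d2‖
  set D := ‖1 + m1 * star m2‖
  have key : ∀ t, Lam m1 m2 d1 d2 t =
      (4 * a * b / D^2) * Real.sinh (t + (1/2) * Real.log (b / a))^2 := by
    intro t
    rw [Lam, ← hz, h1, sinh_sq_aux]
    have e1 : Real.exp (2*(t + (1/2) * Real.log (b / a))) = Real.exp (2*t) * (b/a) := by
      rw [show 2*(t + (1/2) * Real.log (b / a)) = 2*t + Real.log (b/a) by ring,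
        Real.exp_add, Real.exp_log (by positivity)]
    have e2 : Real.exp (-(2*(t + (1/2) * Real.log (b / a)))) =
        Real.exp (-(2*t)) * (a/b) := by
      rw [show -(2*(t + (1/2) * Real.log (b / a))) = -(2*t) + Real.log (a/b) by
          rw [Real.log_div hb.ne' ha.ne', Real.log_div ha.ne' hb.ne']; ring,
        Real.exp_add, Real.exp_log (by positivity)]
    rw [e1, e2]
    show (Real.exp (2*t) * b^2 + Real.exp (-(2*t)) * a^2) / D^2 - 1/2 * (4*a*b/D^2)
      = 4*a*b/D^2 * ((Real.exp (2*t)*(b/a) + Real.exp (-(2*t))*(a/b) - 2)/4)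
    field_simp
    ring
  refine ⟨h1, key, ?_⟩
  rw [key]
  have : (Real.log a - Real.log b) / 2 + (1/2) * Real.log (b / a) = 0 := by
    rw [Real.log_div hb.ne' ha.ne']; ring
  rw [this]
  simp
end
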